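/- There exist an information network (V,d,b) in which the only directed cycle of the directed graph on V\{d} (with an edge from v to u whenever b v u > 0) is a self-loop at a single non-void node, and a time horizon T ≥ 1, such that the expected influence A ↦ σ̄(A,∅) over the period [1,T], as a set function on subsets of V\{d}, is not submodular. -/

import Mathlib

open MeasureTheory

/-- An information network: a finite node set `V` with a distinguished void node `d`
and a row-stochastic weight matrix `b` with entries in `[0,1]` and `b d d = 1`. -/
structure InfoNetwork (V : Type*) [Fintype V] where
  d : V
  b : V → V → ℝ
  b_nonneg : ∀ v u, 0 ≤ b v u
  b_le_one : ∀ v u, b v u ≤ 1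
  row_sum : ∀ v, ∑ u, b v u = 1
  void_loop : b d d = 1

/-- The uniform probability measure on the interval `(0,1)`. -/
noncomputable def unifMeasure : Measure ℝ := volume.restrict (Set.Ioo (0:ℝ) 1)

/-- Product over `V` of uniform measures on `(0,1)`: the distribution of the thresholds. -/
noncomputable def thresholdMeasure (V : Type*) [Fintype V] : Measure (V → ℝ) :=
  Measure.pi fun _ : V => unifMeasure

namespace InfoNetwork

variable {V : Type*} [Fintype V]

/-- The set of active nodes at time `t` under the non-progressive linear threshold model,
with transient initial set `A`, permanent initial set `Ahat` and thresholds `θ`. -/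
noncomputable def activeSet (N : InfoNetwork V) (A Ahat : Set V) (θ : V → ℝ) : ℕ → Set V
  | 0 => A ∪ Ahat
  | t+1 => Ahat ∪
      {v | v ∉ Ahat ∧ θ v ≤ ∑ u, (N.activeSet A Ahat θ t).indicator (N.b v) u}

/-- `E[X^t_v(A,Ahat)]`: the probability (over the random thresholds) that `v` is active
at time `t`. -/
noncomputable def EX (N : InfoNetwork V) (A Ahat : Set V) (t : ℕ) (v : V) : ℝ :=
  (thresholdMeasure V {θ | v ∈ N.activeSet A Ahat θ t}).toReal

/-- The expected influence over the period `[1,T]`. -/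
noncomputable def sigmaBar (N : InfoNetwork V) (T : ℕ) (A Ahat : Set V) : ℝ :=
  (1 / (T : ℝ)) * ∑ t ∈ Finset.Icc 1 T, ∑ v, N.EX A Ahat t v

/-- The edge relation of the directed graph on `V \ {d}`. -/
def edgeRel (N : InfoNetwork V) (v u : V) : Prop :=
  v ≠ N.d ∧ u ≠ N.d ∧ 0 < N.b v u

/-- The network is acyclic if the directed graph on `V \ {d}` has no directed cycle. -/
def Acyclic (N : InfoNetwork V) : Prop :=
  ∀ v, ¬ Relation.TransGen N.edgeRel v v

end InfoNetwork

/-- A real-valued set function `f` is submodular on the ground set `S`. -/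
def SubmodularOn {V : Type*} (S : Set V) (f : Set V → ℝ) : Prop :=
  ∀ A B : Set V, A ⊆ B → B ⊆ S → ∀ w ∈ S, w ∉ B →
    f (insert w B) - f B ≤ f (insert w A) - f A

section AuxNotSubmodular

open MeasureTheory Set

noncomputable instance : SigmaFinite unifMeasure := by unfold unifMeasure; infer_instance

lemma unif_univ' : unifMeasure Set.univ = 1 := by
  simp [unifMeasure, Real.volume_Ioo]

lemma unif_Iic' {c : ℝ} (h1 : c ≤ 1) : unifMeasure (Set.Iic c) = ENNReal.ofReal c := by
  rw [unifMeasure, Measure.restrict_apply measurableSet_Iic]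
  refine le_antisymm ?_ ?_
  · calc volume (Set.Iic c ∩ Set.Ioo 0 1) ≤ volume (Set.Ioc 0 c) := by
          apply measure_mono; rintro x ⟨hx1, hx2, hx3⟩; exact ⟨hx2, hx1⟩
      _ = ENNReal.ofReal c := by rw [Real.volume_Ioc]; simp
  · calc ENNReal.ofReal c = volume (Set.Ioo 0 c) := by rw [Real.volume_Ioo]; simp
      _ ≤ volume (Set.Iic c ∩ Set.Ioo 0 1) := by
          apply measure_mono; rintro x ⟨hx1, hx2⟩
          exact ⟨le_of_lt hx2, hx1, lt_of_lt_of_le hx2 h1⟩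

lemma unif_Ioi' : unifMeasure (Set.Ioi (1:ℝ)) = 0 := by
  rw [unifMeasure, Measure.restrict_apply measurableSet_Ioi]
  convert measure_empty (μ := volume)
  ext x; simp only [Set.mem_inter_iff, Set.mem_Ioi, Set.mem_Ioo, Set.mem_empty_iff_false, iff_false]
  rintro ⟨h1, h2, h3⟩; linarith

lemma cyl_measure {n : ℕ} (i : Fin n) (s : Set ℝ) :
    thresholdMeasure (Fin n) {θ : Fin n → ℝ | θ i ∈ s} = unifMeasure s := by
  have : {θ : Fin n → ℝ | θ i ∈ s}
      = Set.pi Set.univ (Function.update (fun _ => (Set.univ : Set ℝ)) i s) := by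
    ext θ
    simp only [Set.mem_setOf_eq, Set.mem_pi, Set.mem_univ, forall_true_left]
    constructor
    · intro h j
      rcases eq_or_ne j i with rfl | hj
      · simpa using h
      · simp [Function.update_of_ne hj]
    · intro h
      have := h i
      simpa using this
  rw [this, thresholdMeasure, Measure.pi_pi]
  rw [Finset.prod_eq_single i]
  · simp
  · intro j _ hj; simp [Function.update_of_ne hj, unif_univ']
  · simp

lemma cyl_le {n : ℕ} (i : Fin n) {c : ℝ} (h1 : c ≤ 1) :
    thresholdMeasure (Fin n) {θ : Fin n → ℝ | θ i ≤ c} = ENNReal.ofReal c :=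
  (cyl_measure i (Set.Iic c)).trans (unif_Iic' h1)

lemma cyl_zero {n : ℕ} (i : Fin n) :
    thresholdMeasure (Fin n) {θ : Fin n → ℝ | θ i ≤ 0} = 0 := by
  rw [cyl_le i (by norm_num : (0:ℝ) ≤ 1)]; simp

lemma cyl_gt_one {n : ℕ} (i : Fin n) :
    thresholdMeasure (Fin n) {θ : Fin n → ℝ | 1 < θ i} = 0 :=
  (cyl_measure i (Set.Ioi 1)).trans unif_Ioi'

noncomputable def myb : Fin 5 → Fin 5 → ℝ :=
  ![![1,0,0,0,0], ![0,1/2,1/4,1/4,0], ![0,0,0,0,1], ![1,0,0,0,0], ![1,0,0,0,0]]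

noncomputable def myN : InfoNetwork (Fin 5) where
  d := 0
  b := myb
  b_nonneg := by intro v u; fin_cases v <;> fin_cases u <;> norm_num [myb]
  b_le_one := by intro v u; fin_cases v <;> fin_cases u <;> norm_num [myb]
  row_sum := by intro v; fin_cases v <;> norm_num [myb, Fin.sum_univ_five, Matrix.cons_val_two, Matrix.cons_val_three, Matrix.cons_val_four]
  void_loop := by norm_num [myb]

lemma mem_active1 (A : Set (Fin 5)) (θ : Fin 5 → ℝ) (v : Fin 5) :
    v ∈ myN.activeSet A ∅ θ 1 ↔ θ v ≤ ∑ u, A.indicator (myN.b v) u := by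
  simp [InfoNetwork.activeSet]

lemma active1_eq (A : Set (Fin 5)) (θ : Fin 5 → ℝ) :
    myN.activeSet A ∅ θ 1 = {w | θ w ≤ ∑ u, A.indicator (myN.b w) u} := by
  ext w; exact mem_active1 A θ w

lemma mem_active2 (A : Set (Fin 5)) (θ : Fin 5 → ℝ) (v : Fin 5) :
    v ∈ myN.activeSet A ∅ θ 2 ↔
      θ v ≤ ∑ u, ({w | θ w ≤ ∑ u', A.indicator (myN.b w) u'}).indicator (myN.b v) u := by
  rw [show (2:ℕ) = 1+1 from rfl, InfoNetwork.activeSet, active1_eq]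
  simp

-- row sums over a level set
lemma row0_sum (θ c : Fin 5 → ℝ) :
    ∑ u, ({w | θ w ≤ c w}).indicator (myN.b 0) u = if θ 0 ≤ c 0 then 1 else 0 := by
  norm_num [Fin.sum_univ_five, Set.indicator_apply, myN, myb, Matrix.cons_val_two, Matrix.cons_val_three, Matrix.cons_val_four]

lemma row1_sum (θ c : Fin 5 → ℝ) :
    ∑ u, ({w | θ w ≤ c w}).indicator (myN.b 1) u
      = (if θ 1 ≤ c 1 then (1:ℝ)/2 else 0) + (if θ 2 ≤ c 2 then (1:ℝ)/4 else 0)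
        + (if θ 3 ≤ c 3 then (1:ℝ)/4 else 0) := by
  norm_num [Fin.sum_univ_five, Set.indicator_apply, myN, myb, Matrix.cons_val_two, Matrix.cons_val_three, Matrix.cons_val_four]

lemma row2_sum (θ c : Fin 5 → ℝ) :
    ∑ u, ({w | θ w ≤ c w}).indicator (myN.b 2) u = if θ 4 ≤ c 4 then 1 else 0 := by
  norm_num [Fin.sum_univ_five, Set.indicator_apply, myN, myb, Matrix.cons_val_two, Matrix.cons_val_three, Matrix.cons_val_four]

lemma row3_sum (θ c : Fin 5 → ℝ) :
    ∑ u, ({w | θ w ≤ c w}).indicator (myN.b 3) u = if θ 0 ≤ c 0 then 1 else 0 := by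
  norm_num [Fin.sum_univ_five, Set.indicator_apply, myN, myb, Matrix.cons_val_two, Matrix.cons_val_three, Matrix.cons_val_four]

lemma row4_sum (θ c : Fin 5 → ℝ) :
    ∑ u, ({w | θ w ≤ c w}).indicator (myN.b 4) u = if θ 0 ≤ c 0 then 1 else 0 := by
  norm_num [Fin.sum_univ_five, Set.indicator_apply, myN, myb, Matrix.cons_val_two, Matrix.cons_val_three, Matrix.cons_val_four]

-- the four seed sets and their first-step threshold vectors
lemma csum_A : ∀ w, ∑ u, (({1} : Set (Fin 5))).indicator (myN.b w) u = ![0,1/2,0,0,0] w := by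
  intro w; fin_cases w <;>
    norm_num [Fin.sum_univ_five, Set.indicator_apply, Set.mem_singleton_iff, myN, myb]

lemma csum_B : ∀ w, ∑ u, (({1,3} : Set (Fin 5))).indicator (myN.b w) u = ![0,3/4,0,0,0] w := by
  intro w; fin_cases w <;>
    simp [Fin.sum_univ_five, Set.indicator_apply, Set.mem_insert_iff, Set.mem_singleton_iff,
      myN, myb] <;> norm_num

lemma csum_A' : ∀ w, ∑ u, ((insert 4 {1} : Set (Fin 5))).indicator (myN.b w) u
    = ![0,1/2,1,0,0] w := by
  intro w; fin_cases w <;>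
    simp [Fin.sum_univ_five, Set.indicator_apply, Set.mem_insert_iff, Set.mem_singleton_iff,
      myN, myb] <;> norm_num

lemma csum_B' : ∀ w, ∑ u, ((insert 4 {1,3} : Set (Fin 5))).indicator (myN.b w) u
    = ![0,3/4,1,0,0] w := by
  intro w; fin_cases w <;>
    simp [Fin.sum_univ_five, Set.indicator_apply, Set.mem_insert_iff, Set.mem_singleton_iff,
      myN, myb] <;> norm_num

-- EX at time 1
lemma EX1_eq (A : Set (Fin 5)) (v : Fin 5) (c : ℝ)
    (hc : ∑ u, A.indicator (myN.b v) u = c) (h0 : 0 ≤ c) (h1 : c ≤ 1) :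
    myN.EX A ∅ 1 v = c := by
  unfold InfoNetwork.EX
  have hs : {θ : Fin 5 → ℝ | v ∈ myN.activeSet A ∅ θ 1} = {θ | θ v ≤ c} := by
    ext θ; rw [Set.mem_setOf_eq, mem_active1, hc]; rfl
  rw [hs, cyl_le v h1, ENNReal.toReal_ofReal h0]

-- EX at time 2 vanishes for nodes other than 1 (when 0 is not seeded)
lemma csum_row0 (A : Set (Fin 5)) (h0A : (0:Fin 5) ∉ A) :
    ∑ u, A.indicator (myN.b 0) u = 0 := by
  apply Finset.sum_eq_zero
  intro u _
  fin_cases u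
  · exact Set.indicator_of_notMem h0A _
  all_goals exact Set.indicator_apply_eq_zero.mpr (fun _ => rfl)

lemma csum_row4 (A : Set (Fin 5)) (h0A : (0:Fin 5) ∉ A) :
    ∑ u, A.indicator (myN.b 4) u = 0 := by
  apply Finset.sum_eq_zero
  intro u _
  fin_cases u
  · exact Set.indicator_of_notMem h0A _
  all_goals exact Set.indicator_apply_eq_zero.mpr (fun _ => rfl)

lemma EX2_zero_aux (A : Set (Fin 5)) (v j : Fin 5)
    (hrow : ∀ (θ c : Fin 5 → ℝ),
      ∑ u, ({w | θ w ≤ c w}).indicator (myN.b v) u = if θ j ≤ c j then 1 else 0)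
    (hcj : ∑ u, A.indicator (myN.b j) u = 0) :
    myN.EX A ∅ 2 v = 0 := by
  unfold InfoNetwork.EX
  rw [ENNReal.toReal_eq_zero_iff]
  left
  refine measure_mono_null ?_ (measure_union_null (cyl_zero j) (cyl_zero v))
  intro θ hθ
  rw [Set.mem_setOf_eq, mem_active2, hrow] at hθ
  split_ifs at hθ with h
  · left; rwa [hcj] at h
  · right; exact hθ

lemma EX2_zero (A : Set (Fin 5)) (h0A : (0:Fin 5) ∉ A) :
    myN.EX A ∅ 2 0 = 0 ∧ myN.EX A ∅ 2 2 = 0 ∧ myN.EX A ∅ 2 3 = 0 ∧ myN.EX A ∅ 2 4 = 0 :=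
  ⟨EX2_zero_aux A 0 0 row0_sum (csum_row0 A h0A),
   EX2_zero_aux A 2 4 row2_sum (csum_row4 A h0A),
   EX2_zero_aux A 3 0 row3_sum (csum_row0 A h0A),
   EX2_zero_aux A 4 0 row4_sum (csum_row0 A h0A)⟩

-- EX at time 2 for node 1, for each of the four seed sets
lemma EX2_node1 (A : Set (Fin 5)) (c : Fin 5 → ℝ)
    (hc : ∀ w, ∑ u, A.indicator (myN.b w) u = c w) (r : ℝ)
    (hsub : {θ : Fin 5 → ℝ | θ 1 ≤ (if θ 1 ≤ c 1 then (1:ℝ)/2 else 0)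
        + (if θ 2 ≤ c 2 then (1:ℝ)/4 else 0) + (if θ 3 ≤ c 3 then (1:ℝ)/4 else 0)}
      ⊆ {θ : Fin 5 → ℝ | θ 1 ≤ r} ∪ ({θ | θ 2 ≤ 0} ∪ {θ | θ 3 ≤ 0}))
    (hsup : {θ : Fin 5 → ℝ | θ 1 ≤ r} \ {θ | 1 < θ 2}
      ⊆ {θ : Fin 5 → ℝ | θ 1 ≤ (if θ 1 ≤ c 1 then (1:ℝ)/2 else 0)
        + (if θ 2 ≤ c 2 then (1:ℝ)/4 else 0) + (if θ 3 ≤ c 3 then (1:ℝ)/4 else 0)})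
    (h0 : 0 ≤ r) (h1 : r ≤ 1) :
    myN.EX A ∅ 2 1 = r := by
  unfold InfoNetwork.EX
  have hset : {θ : Fin 5 → ℝ | (1:Fin 5) ∈ myN.activeSet A ∅ θ 2}
      = {θ : Fin 5 → ℝ | θ 1 ≤ (if θ 1 ≤ c 1 then (1:ℝ)/2 else 0)
        + (if θ 2 ≤ c 2 then (1:ℝ)/4 else 0) + (if θ 3 ≤ c 3 then (1:ℝ)/4 else 0)} := by
    ext θ
    rw [Set.mem_setOf_eq, mem_active2]
    have : {w | θ w ≤ ∑ u', A.indicator (myN.b w) u'} = {w | θ w ≤ c w} := by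
      ext w; rw [Set.mem_setOf_eq, hc w]; rfl
    rw [this, row1_sum]; rfl
  rw [hset]
  have hle : thresholdMeasure (Fin 5) {θ : Fin 5 → ℝ | θ 1 ≤ (if θ 1 ≤ c 1 then (1:ℝ)/2 else 0)
        + (if θ 2 ≤ c 2 then (1:ℝ)/4 else 0) + (if θ 3 ≤ c 3 then (1:ℝ)/4 else 0)}
      ≤ ENNReal.ofReal r := by
    refine le_trans (measure_mono hsub) ?_
    refine le_trans (measure_union_le _ _) ?_
    rw [cyl_le (1:Fin 5) h1]
    have : thresholdMeasure (Fin 5) ({θ : Fin 5 → ℝ | θ 2 ≤ 0} ∪ {θ | θ 3 ≤ 0}) = 0 :=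
      measure_union_null (cyl_zero _) (cyl_zero _)
    rw [this, add_zero]
  have hge : ENNReal.ofReal r ≤ thresholdMeasure (Fin 5)
      {θ : Fin 5 → ℝ | θ 1 ≤ (if θ 1 ≤ c 1 then (1:ℝ)/2 else 0)
        + (if θ 2 ≤ c 2 then (1:ℝ)/4 else 0) + (if θ 3 ≤ c 3 then (1:ℝ)/4 else 0)} := by
    refine le_trans (le_of_eq ?_) (measure_mono hsup)
    rw [measure_diff_null (cyl_gt_one (2:Fin 5)), cyl_le (1:Fin 5) h1]
  rw [le_antisymm hle hge, ENNReal.toReal_ofReal h0]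

-- generic subset lemmas for the node-1 time-2 squeeze
lemma hsub_case1 (c1 : ℝ) :
    {θ : Fin 5 → ℝ | θ 1 ≤ (if θ 1 ≤ c1 then (1:ℝ)/2 else 0)
        + (if θ 2 ≤ (0:ℝ) then (1:ℝ)/4 else 0) + (if θ 3 ≤ (0:ℝ) then (1:ℝ)/4 else 0)}
      ⊆ {θ : Fin 5 → ℝ | θ 1 ≤ 1/2} ∪ ({θ | θ 2 ≤ 0} ∪ {θ | θ 3 ≤ 0}) := by
  intro θ h
  simp only [Set.mem_setOf_eq, Set.mem_union] at h ⊢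
  by_cases h2 : θ 2 ≤ 0
  · exact Or.inr (Or.inl h2)
  by_cases h3 : θ 3 ≤ 0
  · exact Or.inr (Or.inr h3)
  left
  split_ifs at h <;> linarith

lemma hsup_case1 (c1 : ℝ) (hc1 : 1/2 ≤ c1) :
    {θ : Fin 5 → ℝ | θ 1 ≤ 1/2} \ {θ | 1 < θ 2}
      ⊆ {θ : Fin 5 → ℝ | θ 1 ≤ (if θ 1 ≤ c1 then (1:ℝ)/2 else 0)
        + (if θ 2 ≤ (0:ℝ) then (1:ℝ)/4 else 0) + (if θ 3 ≤ (0:ℝ) then (1:ℝ)/4 else 0)} := by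
  rintro θ ⟨h1, h2⟩
  simp only [Set.mem_setOf_eq] at h1 h2 ⊢
  split_ifs <;> linarith

lemma hsub_case2 (c1 : ℝ) (hc1 : 1/4 ≤ c1) :
    {θ : Fin 5 → ℝ | θ 1 ≤ (if θ 1 ≤ c1 then (1:ℝ)/2 else 0)
        + (if θ 2 ≤ (1:ℝ) then (1:ℝ)/4 else 0) + (if θ 3 ≤ (0:ℝ) then (1:ℝ)/4 else 0)}
      ⊆ {θ : Fin 5 → ℝ | θ 1 ≤ c1} ∪ ({θ | θ 2 ≤ 0} ∪ {θ | θ 3 ≤ 0}) := by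
  intro θ h
  simp only [Set.mem_setOf_eq, Set.mem_union] at h ⊢
  by_cases h3 : θ 3 ≤ 0
  · exact Or.inr (Or.inr h3)
  left
  split_ifs at h <;> linarith

lemma hsup_case2 (c1 : ℝ) (hc1 : 1/2 ≤ c1) (hc1' : c1 ≤ 3/4) :
    {θ : Fin 5 → ℝ | θ 1 ≤ c1} \ {θ | 1 < θ 2}
      ⊆ {θ : Fin 5 → ℝ | θ 1 ≤ (if θ 1 ≤ c1 then (1:ℝ)/2 else 0)
        + (if θ 2 ≤ (1:ℝ) then (1:ℝ)/4 else 0) + (if θ 3 ≤ (0:ℝ) then (1:ℝ)/4 else 0)} := by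
  rintro θ ⟨h1, h2⟩
  simp only [Set.mem_setOf_eq] at h1 h2 ⊢
  split_ifs <;> linarith

-- EX at time 2 for node 1, per seed set
lemma EX2_A : myN.EX ({1} : Set (Fin 5)) ∅ 2 1 = 1/2 :=
  EX2_node1 _ ![0,1/2,0,0,0] csum_A (1/2)
    (hsub_case1 (1/2)) (hsup_case1 (1/2) (by norm_num)) (by norm_num) (by norm_num)

lemma EX2_B : myN.EX ({1,3} : Set (Fin 5)) ∅ 2 1 = 1/2 :=
  EX2_node1 _ ![0,3/4,0,0,0] csum_B (1/2)
    (hsub_case1 (3/4)) (hsup_case1 (3/4) (by norm_num)) (by norm_num) (by norm_num)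

lemma EX2_A' : myN.EX (insert 4 {1} : Set (Fin 5)) ∅ 2 1 = 1/2 :=
  EX2_node1 _ ![0,1/2,1,0,0] csum_A' (1/2)
    (hsub_case2 (1/2) (by norm_num)) (hsup_case2 (1/2) (by norm_num) (by norm_num))
    (by norm_num) (by norm_num)

lemma EX2_B' : myN.EX (insert 4 {1,3} : Set (Fin 5)) ∅ 2 1 = 3/4 :=
  EX2_node1 _ ![0,3/4,1,0,0] csum_B' (3/4)
    (hsub_case2 (3/4) (by norm_num)) (hsup_case2 (3/4) (by norm_num) (by norm_num))
    (by norm_num) (by norm_num)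

-- sums over all nodes
lemma sum1_A : ∑ v, myN.EX ({1} : Set (Fin 5)) ∅ 1 v = 1/2 := by
  rw [Fin.sum_univ_five,
    EX1_eq _ 0 0 ((csum_A 0).trans rfl) (by norm_num) (by norm_num),
    EX1_eq _ 1 (1/2) ((csum_A 1).trans rfl) (by norm_num) (by norm_num),
    EX1_eq _ 2 0 ((csum_A 2).trans rfl) (by norm_num) (by norm_num),
    EX1_eq _ 3 0 ((csum_A 3).trans rfl) (by norm_num) (by norm_num),
    EX1_eq _ 4 0 ((csum_A 4).trans rfl) (by norm_num) (by norm_num)]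
  norm_num

lemma sum1_B : ∑ v, myN.EX ({1,3} : Set (Fin 5)) ∅ 1 v = 3/4 := by
  rw [Fin.sum_univ_five,
    EX1_eq _ 0 0 ((csum_B 0).trans rfl) (by norm_num) (by norm_num),
    EX1_eq _ 1 (3/4) ((csum_B 1).trans rfl) (by norm_num) (by norm_num),
    EX1_eq _ 2 0 ((csum_B 2).trans rfl) (by norm_num) (by norm_num),
    EX1_eq _ 3 0 ((csum_B 3).trans rfl) (by norm_num) (by norm_num),
    EX1_eq _ 4 0 ((csum_B 4).trans rfl) (by norm_num) (by norm_num)]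
  norm_num

lemma sum1_A' : ∑ v, myN.EX (insert 4 {1} : Set (Fin 5)) ∅ 1 v = 3/2 := by
  rw [Fin.sum_univ_five,
    EX1_eq _ 0 0 ((csum_A' 0).trans rfl) (by norm_num) (by norm_num),
    EX1_eq _ 1 (1/2) ((csum_A' 1).trans rfl) (by norm_num) (by norm_num),
    EX1_eq _ 2 1 ((csum_A' 2).trans rfl) (by norm_num) (by norm_num),
    EX1_eq _ 3 0 ((csum_A' 3).trans rfl) (by norm_num) (by norm_num),
    EX1_eq _ 4 0 ((csum_A' 4).trans rfl) (by norm_num) (by norm_num)]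
  norm_num

lemma sum1_B' : ∑ v, myN.EX (insert 4 {1,3} : Set (Fin 5)) ∅ 1 v = 7/4 := by
  rw [Fin.sum_univ_five,
    EX1_eq _ 0 0 ((csum_B' 0).trans rfl) (by norm_num) (by norm_num),
    EX1_eq _ 1 (3/4) ((csum_B' 1).trans rfl) (by norm_num) (by norm_num),
    EX1_eq _ 2 1 ((csum_B' 2).trans rfl) (by norm_num) (by norm_num),
    EX1_eq _ 3 0 ((csum_B' 3).trans rfl) (by norm_num) (by norm_num),
    EX1_eq _ 4 0 ((csum_B' 4).trans rfl) (by norm_num) (by norm_num)]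
  norm_num

lemma sum2_gen (A : Set (Fin 5)) (h0A : (0:Fin 5) ∉ A) (r : ℝ) (h1 : myN.EX A ∅ 2 1 = r) :
    ∑ v, myN.EX A ∅ 2 v = r := by
  obtain ⟨z0, z2, z3, z4⟩ := EX2_zero A h0A
  rw [Fin.sum_univ_five, z0, h1, z2, z3, z4]
  ring

-- sigmaBar with T = 2
lemma sigma_split (A : Set (Fin 5)) :
    myN.sigmaBar 2 A ∅ = (1/2) * ((∑ v, myN.EX A ∅ 1 v) + (∑ v, myN.EX A ∅ 2 v)) := by
  unfold InfoNetwork.sigmaBar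
  rw [show (Finset.Icc 1 2 : Finset ℕ) = {1, 2} by decide]
  rw [Finset.sum_insert (by decide), Finset.sum_singleton]
  norm_num

lemma sigma_A : myN.sigmaBar 2 ({1} : Set (Fin 5)) ∅ = 1/2 := by
  rw [sigma_split, sum1_A, sum2_gen _ (by simp) _ EX2_A]; norm_num

lemma sigma_B : myN.sigmaBar 2 ({1,3} : Set (Fin 5)) ∅ = 5/8 := by
  rw [sigma_split, sum1_B, sum2_gen _ (by simp) _ EX2_B]; norm_num

lemma sigma_A' : myN.sigmaBar 2 (insert 4 {1} : Set (Fin 5)) ∅ = 1 := by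
  rw [sigma_split, sum1_A', sum2_gen _ (by simp) _ EX2_A']; norm_num

lemma sigma_B' : myN.sigmaBar 2 (insert 4 {1,3} : Set (Fin 5)) ∅ = 5/4 := by
  rw [sigma_split, sum1_B', sum2_gen _ (by simp) _ EX2_B']; norm_num

-- cycle structure
lemma edge_case {v u : Fin 5} (h : myN.edgeRel v u) : v = 1 ∨ (v = 2 ∧ u = 4) := by
  obtain ⟨hv, hu, hb⟩ := h
  fin_cases v <;> fin_cases u <;> simp_all [myN, myb] <;> exact lt_irrefl (0:ℝ) hb

lemma reach_case {v u : Fin 5} (h : Relation.TransGen myN.edgeRel v u) :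
    v = 1 ∨ (v = 2 ∧ u = 4) := by
  induction h with
  | single h => exact edge_case h
  | tail h e ih =>
    rcases ih with h1 | ⟨h2, h4⟩
    · exact Or.inl h1
    · subst h4
      rcases edge_case e with h1' | ⟨h2', _⟩
      · exact absurd h1' (by decide)
      · exact absurd h2' (by decide)

end AuxNotSubmodular

/-- There exist an information network in which the only directed cycle of the
directed graph on `V \ {d}` is a self-loop at a single non-void node `v₀` (i.e. `v₀` has a
positive self-loop weight and every node lying on a directed cycle equals `v₀`), and a time
horizon `T ≥ 1`, such that the expected influence `A ↦ σ̄(A,∅)` over `[1,T]` is not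
submodular on subsets of `V \ {d}`. -/
theorem exists_selfloop_network_influence_not_submodular :
    ∃ (n : ℕ) (N : InfoNetwork (Fin n)) (T : ℕ), 1 ≤ T ∧
      (∃ v₀ : Fin n, v₀ ≠ N.d ∧ 0 < N.b v₀ v₀ ∧
        (∀ v : Fin n, Relation.TransGen N.edgeRel v v → v = v₀)) ∧
      ¬ SubmodularOn {x : Fin n | x ≠ N.d} (fun A => N.sigmaBar T A ∅) := by
  refine ⟨5, myN, 2, by norm_num, ⟨1, by decide, by norm_num [myN, myb], ?_⟩, ?_⟩
  · intro v h
    rcases reach_case h with h1 | ⟨h2, h4⟩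
    · exact h1
    · exact absurd (h2.symm.trans h4) (by decide)
  · intro hsub
    have hAB : ({1} : Set (Fin 5)) ⊆ ({1,3} : Set (Fin 5)) := by
      intro x hx
      simp only [Set.mem_singleton_iff] at hx
      simp [hx]
    have hBS : ({1,3} : Set (Fin 5)) ⊆ {x | x ≠ myN.d} := by
      intro x hx
      simp only [Set.mem_insert_iff, Set.mem_singleton_iff] at hx
      rcases hx with rfl | rfl <;> decide
    have key := hsub {1} {1,3} hAB hBS 4 (by decide) (by decide)
    simp only [sigma_A, sigma_B, sigma_A', sigma_B'] at key
    norm_num at key
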